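/- Let 𝒢 be a permutation-like matrix group of dimension d and let C ∈ 𝒢 be a maximal cycle. Then ⟨C⟩ is self-centralized in 𝒢: every A ∈ 𝒢 that commutes with C lies in the cyclic subgroup ⟨C⟩ generated by C. -/

import Mathlib

open Matrix
open Fin.NatCast Fin.CommRing

/-- A `d × d` complex matrix is a permutation matrix if it is the matrix of some
permutation of the standard basis. -/
def IsPermMatrix {d : ℕ} (M : Matrix (Fin d) (Fin d) ℂ) : Prop :=
  ∃ σ : Equiv.Perm (Fin d), M = σ.permMatrix ℂ

/-- A `d × d` complex matrix is a maximal cycle if it is similar to the permutation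
matrix of a cycle of length `d`. -/
def IsMaximalCycle {d : ℕ} (M : Matrix (Fin d) (Fin d) ℂ) : Prop :=
  ∃ T : (Matrix (Fin d) (Fin d) ℂ)ˣ,
    T⁻¹.val * M * T.val = (finRotate d).permMatrix ℂ

/-- A matrix group (subgroup of `GL_d(ℂ)`) is permutation-like if each of its elements
is similar to a permutation matrix. -/
def IsPermutationLikeGroup {d : ℕ} (G : Subgroup (GL (Fin d) ℂ)) : Prop :=
  ∀ A ∈ G, ∃ T : (Matrix (Fin d) (Fin d) ℂ)ˣ,
    IsPermMatrix (T⁻¹.val * A.val * T.val)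

/-- A matrix group is a permutation matrix group if a single similarity transformation
turns all of its elements into permutation matrices simultaneously. -/
def IsPermutationMatrixGroup {d : ℕ} (G : Subgroup (GL (Fin d) ℂ)) : Prop :=
  ∃ T : (Matrix (Fin d) (Fin d) ℂ)ˣ, ∀ A ∈ G,
    IsPermMatrix (T⁻¹.val * A.val * T.val)



namespace MaxCycleAux

/-- Conjugation by a unit, as a monoid hom. -/
def conjHom {M : Type*} [Monoid M] (T : Mˣ) : M →* M where
  toFun X := T.val * X * T⁻¹.val
  map_one' := by simp
  map_mul' X Y := by
    simp only [mul_assoc, Units.inv_mul_cancel_left]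

lemma conjHom_apply {M : Type*} [Monoid M] (T : Mˣ) (X : M) :
    conjHom T X = T.val * X * T⁻¹.val := rfl

lemma conjHom_conj {M : Type*} [Monoid M] (T : Mˣ) (X : M) :
    conjHom T (T⁻¹.val * X * T.val) = X := by
  simp only [conjHom_apply, mul_assoc, Units.mul_inv_cancel_left, Units.mul_inv_cancel_right]
  rw [Units.mul_inv, mul_one]

lemma conj_pow {M : Type*} [Monoid M] (T : Mˣ) (X : M) (n : ℕ) :
    (T⁻¹.val * X * T.val) ^ n = T⁻¹.val * X ^ n * T.val := by
  induction n with
  | zero => simp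
  | succ n ih =>
    rw [pow_succ, ih, pow_succ]
    simp only [mul_assoc, Units.mul_inv_cancel_left]

lemma finRotate_pow_apply {d : ℕ} [NeZero d] (n : ℕ) (i : Fin d) :
    ((finRotate d) ^ n) i = i + (n : Fin d) := by
  rcases Nat.exists_eq_succ_of_ne_zero (NeZero.ne d) with ⟨m, rfl⟩
  induction n with
  | zero => simp
  | succ n ih =>
    rw [pow_succ', Equiv.Perm.mul_apply, ih, finRotate_succ_apply, Nat.cast_add, Nat.cast_one]
    ring

lemma finRotate_apply' {d : ℕ} [NeZero d] (i : Fin d) : finRotate d i = i + 1 := by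
  have := finRotate_pow_apply (d := d) 1 i
  rwa [pow_one, Nat.cast_one] at this

lemma permMatrix_apply {d : ℕ} (σ : Equiv.Perm (Fin d)) (i j : Fin d) :
    σ.permMatrix ℂ i j = if σ i = j then 1 else 0 := by
  simp [Equiv.Perm.permMatrix, PEquiv.toMatrix_apply, Equiv.toPEquiv_apply, Option.mem_def,
    eq_comm]

lemma permMatrix_pow {d : ℕ} (σ : Equiv.Perm (Fin d)) (n : ℕ) :
    (σ.permMatrix ℂ) ^ n = (σ ^ n).permMatrix ℂ := by
  induction n with
  | zero =>
    rw [pow_zero, pow_zero]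
    symm
    show ((Equiv.refl (Fin d)).toPEquiv.toMatrix : Matrix _ _ ℂ) = 1
    rw [Equiv.toPEquiv_refl, PEquiv.toMatrix_refl]
  | succ n ih =>
    rw [pow_succ', ih]
    have h1 : (σ ^ (n+1) : Equiv.Perm (Fin d)) = (σ.trans (σ ^ n) : Fin d ≃ Fin d) := by
      rw [pow_succ]; rfl
    show _ = (σ ^ (n+1)).toPEquiv.toMatrix
    rw [h1, Equiv.toPEquiv_trans, PEquiv.toMatrix_trans]

lemma trace_permMatrix_natCast {d : ℕ} (σ : Equiv.Perm (Fin d)) :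
    ∃ t : ℕ, trace (σ.permMatrix ℂ) = (t : ℂ) := by
  refine ⟨(Finset.univ.filter fun i => σ i = i).card, ?_⟩
  rw [trace]
  simp only [diag_apply, permMatrix_apply]
  rw [Finset.sum_boole]

lemma trace_conjHom {d : ℕ} (T : (Matrix (Fin d) (Fin d) ℂ)ˣ) (X : Matrix (Fin d) (Fin d) ℂ) :
    trace (conjHom T X) = trace X := by
  rw [conjHom_apply, trace_mul_comm, ← mul_assoc, ← Units.val_mul, inv_mul_cancel,
    Units.val_one, one_mul]

lemma norm_eq_one_re_eq_one {z : ℂ} (hn : ‖z‖ = 1) (hr : z.re = 1) : z = 1 := by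
  have h1 : Complex.normSq z = 1 := by
    rw [← Complex.sq_norm, hn, one_pow]
  have h2 : z.re * z.re + z.im * z.im = 1 := by rwa [Complex.normSq_apply] at h1
  have him : z.im = 0 := by nlinarith
  exact Complex.ext (by simp [hr]) (by simp [him])

end MaxCycleAux

open MaxCycleAux

theorem maximal_cycle_self_centralized'
    (d : ℕ) (G : Subgroup (GL (Fin d) ℂ))
    (hG : ∀ A ∈ G, ∃ T : (Matrix (Fin d) (Fin d) ℂ)ˣ,
      ∃ σ : Equiv.Perm (Fin d), T⁻¹.val * A.val * T.val = σ.permMatrix ℂ)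
    (C : GL (Fin d) ℂ) (hCG : C ∈ G)
    (hC : ∃ T : (Matrix (Fin d) (Fin d) ℂ)ˣ,
      T⁻¹.val * C.val * T.val = (finRotate d).permMatrix ℂ) :
    ∀ A ∈ G, A * C = C * A → A ∈ Subgroup.zpowers C := by
  intro A hAG hacomm
  rcases Nat.eq_zero_or_pos d with hd0 | hd
  · subst hd0
    refine Subgroup.mem_zpowers_iff.mpr ⟨0, ?_⟩
    apply Units.ext
    ext i j
    exact i.elim0
  haveI : NeZero d := ⟨hd.ne'⟩
  obtain ⟨T, hT⟩ := hC
  set P : Matrix (Fin d) (Fin d) ℂ := (finRotate d).permMatrix ℂ with hPdef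
  set B : Matrix (Fin d) (Fin d) ℂ := T⁻¹.val * A.val * T.val with hBdef
  -- A and C as conjugates of B and P
  have hA : A.val = conjHom T B := (conjHom_conj T A.val).symm
  have hCval : C.val = conjHom T P := by rw [← hT, conjHom_conj]
  -- commutation
  have hBP : B * P = P * B := by
    have h2 : A.val * C.val = C.val * A.val := congrArg Units.val hacomm
    calc B * P = T⁻¹.val * (A.val * C.val) * T.val := by
          rw [hBdef, ← hT]; simp only [mul_assoc, Units.mul_inv_cancel_left]
      _ = T⁻¹.val * (C.val * A.val) * T.val := by rw [h2]
      _ = P * B := by rw [hBdef, ← hT]; simp only [mul_assoc, Units.mul_inv_cancel_left]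
  -- entries of powers of P
  have hPpow : ∀ (n : ℕ) (i j : Fin d), (P ^ n) i j = if i + (n : Fin d) = j then 1 else 0 := by
    intro n i j
    rw [hPdef, permMatrix_pow, permMatrix_apply, finRotate_pow_apply]
  -- B is circulant
  have hPBmat : P * B = B.submatrix (finRotate d) id := PEquiv.toMatrix_toPEquiv_mul _ _
  have hBPmat : B * P = B.submatrix id (finRotate d).symm := PEquiv.mul_toMatrix_toPEquiv _ _
  have hshift : ∀ i j : Fin d, B (i + 1) (j + 1) = B i j := by
    intro i j
    have h1 : (P * B) i (j + 1) = (B * P) i (j + 1) := by rw [hBP]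
    rw [hPBmat, hBPmat] at h1
    simp only [submatrix_apply, id] at h1
    rw [finRotate_apply'] at h1
    rw [h1]
    congr 1
    rw [Equiv.symm_apply_eq, finRotate_apply']
  have hshiftn : ∀ (n : ℕ) (i j : Fin d), B (i + (n : Fin d)) (j + (n : Fin d)) = B i j := by
    intro n
    induction n with
    | zero => simp
    | succ n ih =>
      intro i j
      have := hshift (i + (n : Fin d)) (j + (n : Fin d))
      rw [ih] at this
      rw [← this]
      congr 1 <;> · rw [Nat.cast_add, Nat.cast_one]; ring
  set b : Fin d → ℂ := fun k => B k 0 with hbdef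
  have hBb : ∀ i j : Fin d, B i j = b (i - j) := by
    intro i j
    have h := hshiftn j.val (i - j) 0
    rw [Fin.cast_val_eq_self, sub_add_cancel, zero_add] at h
    show B i j = B (i - j) 0
    exact h
  -- trace of B * P^n
  have htrace : ∀ n : Fin d, trace (B * P ^ n.val) = (d : ℂ) * b n := by
    intro n
    have hBPn : B * P ^ n.val = B.submatrix id ((finRotate d) ^ n.val).symm := by
      rw [hPdef, permMatrix_pow]
      exact PEquiv.mul_toMatrix_toPEquiv _ _
    rw [hBPn, trace]
    have hval : ∀ i : Fin d, ((finRotate d) ^ n.val).symm i = i - n := by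
      intro i
      rw [Equiv.symm_apply_eq, finRotate_pow_apply, Fin.cast_val_eq_self]
      ring
    have heach : ∀ i : Fin d, (B.submatrix id ((finRotate d) ^ n.val).symm).diag i = b n := by
      intro i
      simp only [diag_apply, submatrix_apply, id, hval i]
      rw [hBb]
      congr 1
      ring
    rw [Finset.sum_congr rfl (fun i _ => heach i)]
    rw [Finset.sum_const, Finset.card_univ, Fintype.card_fin, nsmul_eq_mul]
  -- traces of group elements are nonnegative integers
  have hGnat : ∀ D : GL (Fin d) ℂ, D ∈ G → ∃ t : ℕ, trace D.val = (t : ℂ) := by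
    intro D hD
    obtain ⟨S, σ, hσ⟩ := hG D hD
    obtain ⟨t, ht⟩ := trace_permMatrix_natCast σ
    refine ⟨t, ?_⟩
    rw [← ht, ← hσ]
    rw [trace_mul_comm, ← mul_assoc, ← Units.val_mul, mul_inv_cancel, Units.val_one, one_mul]
  -- the integers t n with t n = d * b n
  have hkey : ∀ n : Fin d, ∃ t : ℕ, (t : ℂ) = (d : ℂ) * b n := by
    intro n
    have hmem : A * C ^ n.val ∈ G := G.mul_mem hAG (G.pow_mem hCG n.val)
    obtain ⟨t, ht⟩ := hGnat _ hmem
    refine ⟨t, ?_⟩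
    rw [← htrace n, ← ht]
    have hval : (A * C ^ n.val).val = conjHom T (B * P ^ n.val) := by
      rw [Units.val_mul, Units.val_pow_eq_pow_val, hA, hCval, ← _root_.map_pow, ← _root_.map_mul]
    rw [hval, trace_conjHom]
  choose t ht using hkey
  -- primitive root
  set ζ : ℂ := Complex.exp (2 * Real.pi * Complex.I / d) with hζdef
  have hζ : IsPrimitiveRoot ζ d := Complex.isPrimitiveRoot_exp d hd.ne'
  have hζd : ζ ^ d = 1 := hζ.pow_eq_one
  have hmod : ∀ n : ℕ, ζ ^ (n % d) = ζ ^ n := by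
    intro n
    conv_rhs => rw [← Nat.div_add_mod n d]
    rw [pow_add, pow_mul, hζd, one_pow, one_mul]
  set χ : Fin d → ℂ := fun k => ζ ^ (k : ℕ) with hχdef
  have hχ_add : ∀ x y : Fin d, χ (x + y) = χ x * χ y := by
    intro x y
    show ζ ^ ((x + y : Fin d) : ℕ) = ζ ^ (x : ℕ) * ζ ^ (y : ℕ)
    rw [Fin.val_add, hmod, pow_add]
  have hχ_inj : Function.Injective χ := by
    intro x y h
    exact Fin.ext (hζ.pow_inj x.isLt y.isLt h)
  have hχ_zero : χ 0 = 1 := by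
    show ζ ^ ((0 : Fin d) : ℕ) = 1
    simp
  have hχ_norm : ∀ k : Fin d, ‖χ k‖ = 1 := by
    intro k
    have hpow : (χ k) ^ d = 1 := by
      show (ζ ^ (k : ℕ)) ^ d = 1
      rw [← pow_mul, mul_comm, pow_mul, hζd, one_pow]
    exact Complex.norm_eq_one_of_pow_eq_one hpow hd.ne'
  -- eigenvalue norms
  have eig_norm : ∀ (v : Fin d → ℂ) (a : ℂ), B *ᵥ v = a • v → v 0 = 1 → ‖a‖ = 1 := by
    intro v a hv hv0
    obtain ⟨S, σA, hσA⟩ := hG A hAG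
    set N := orderOf σA with hNdef
    have hNpos : N ≠ 0 := (orderOf_pos σA).ne'
    have hperm1 : (σA.permMatrix ℂ) ^ N = 1 := by
      rw [permMatrix_pow, pow_orderOf_eq_one]
      show ((Equiv.refl (Fin d)).toPEquiv.toMatrix : Matrix _ _ ℂ) = 1
      rw [Equiv.toPEquiv_refl, PEquiv.toMatrix_refl]
    have hAN : A.val ^ N = 1 := by
      have h1 : A.val = conjHom S (σA.permMatrix ℂ) := by rw [← hσA, conjHom_conj]
      rw [h1, ← _root_.map_pow, hperm1, _root_.map_one]
    have hBN : B ^ N = 1 := by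
      rw [hBdef, MaxCycleAux.conj_pow, hAN, mul_one, ← Units.val_mul, inv_mul_cancel, Units.val_one]
    have hvN : ∀ n : ℕ, (B ^ n) *ᵥ v = a ^ n • v := by
      intro n
      induction n with
      | zero => simp
      | succ n ih =>
        rw [pow_succ', ← mulVec_mulVec, ih, mulVec_smul, hv, smul_smul, ← pow_succ]
    have haN : a ^ N = 1 := by
      have h1 : (B ^ N) *ᵥ v = v := by rw [hBN, one_mulVec]
      have h2 := (hvN N).symm.trans h1
      have h3 := congrFun h2 0
      simp only [Pi.smul_apply, smul_eq_mul, hv0, mul_one] at h3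
      exact h3
    exact Complex.norm_eq_one_of_pow_eq_one haN hNpos
  -- the two eigenvalues
  set a0 : ℂ := ∑ k : Fin d, b k with ha0def
  set a1 : ℂ := ∑ k : Fin d, b k * χ (-k) with ha1def
  have hv0 : B *ᵥ (fun _ => (1 : ℂ)) = a0 • (fun _ => (1 : ℂ)) := by
    funext i
    simp only [mulVec, dotProduct, Pi.smul_apply, smul_eq_mul, mul_one]
    rw [ha0def]
    refine (Fintype.sum_equiv (Equiv.subLeft i) (fun m => b m) (fun k => B i k) ?_).symm
    intro x
    rw [Equiv.subLeft_apply]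
    show b x = B i (i - x)
    rw [hBb, sub_sub_cancel]
  have hv1 : B *ᵥ χ = a1 • χ := by
    funext i
    simp only [mulVec, dotProduct, Pi.smul_apply, smul_eq_mul]
    calc ∑ k, B i k * χ k
        = ∑ m, b m * χ (i - m) := by
          refine (Fintype.sum_equiv (Equiv.subLeft i) _ _ ?_).symm
          intro x
          rw [Equiv.subLeft_apply, hBb, sub_sub_cancel]
      _ = ∑ m, (b m * χ (-m)) * χ i := by
          refine Finset.sum_congr rfl fun m _ => ?_
          rw [sub_eq_add_neg, add_comm, hχ_add]
          ring
      _ = a1 * χ i := by rw [ha1def, ← Finset.sum_mul]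
  have ha0norm : ‖a0‖ = 1 := eig_norm _ _ hv0 rfl
  have ha1norm : ‖a1‖ = 1 := eig_norm _ _ hv1 hχ_zero
  -- sum of the t's is d
  have hsum_cast : ((∑ k : Fin d, t k : ℕ) : ℂ) = (d : ℂ) * a0 := by
    push_cast
    rw [ha0def, Finset.mul_sum]
    exact Finset.sum_congr rfl fun k _ => ht k
  have hsumt : (∑ k : Fin d, t k) = d := by
    have h1 : ‖((∑ k : Fin d, t k : ℕ) : ℂ)‖ = ‖(d : ℂ) * a0‖ := by rw [hsum_cast]
    rw [Complex.norm_natCast, norm_mul, Complex.norm_natCast, ha0norm, mul_one] at h1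
    exact_mod_cast h1
  -- the triangle-equality argument
  have hda1 : (d : ℂ) * a1 = ∑ k : Fin d, (t k : ℂ) * χ (-k) := by
    rw [ha1def, Finset.mul_sum]
    refine Finset.sum_congr rfl fun k _ => ?_
    rw [← mul_assoc, ← ht k]
  set r : Fin d → ℝ := fun k => ((starRingEnd ℂ) a1 * χ (-k)).re with hrdef
  have hr_le : ∀ k : Fin d, r k ≤ 1 := by
    intro k
    have h1 : ((starRingEnd ℂ) a1 * χ (-k)).re ≤ ‖(starRingEnd ℂ) a1 * χ (-k)‖ :=
      Complex.re_le_norm _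
    have h2 : ‖(starRingEnd ℂ) a1 * χ (-k)‖ = 1 := by
      rw [norm_mul, RCLike.norm_conj, ha1norm, hχ_norm, mul_one]
    rw [hrdef]
    calc ((starRingEnd ℂ) a1 * χ (-k)).re ≤ _ := h1
      _ = 1 := h2
  have hca : a1 * (starRingEnd ℂ) a1 = 1 := by
    rw [Complex.mul_conj]
    rw [Complex.normSq_eq_norm_sq, ha1norm]
    norm_num
  have hsum_r : ∑ k : Fin d, (t k : ℝ) * r k = (d : ℝ) := by
    have h2 : ∑ k : Fin d, ((t k : ℂ)) * ((starRingEnd ℂ) a1 * χ (-k)) = (d : ℂ) := by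
      have h3 : ∑ k : Fin d, ((t k : ℂ)) * ((starRingEnd ℂ) a1 * χ (-k))
          = (starRingEnd ℂ) a1 * ((d : ℂ) * a1) := by
        rw [hda1, Finset.mul_sum]
        refine Finset.sum_congr rfl fun k _ => ?_
        ring
      rw [h3]
      calc (starRingEnd ℂ) a1 * ((d : ℂ) * a1) = (d : ℂ) * (a1 * (starRingEnd ℂ) a1) := by ring
        _ = (d : ℂ) := by rw [hca, mul_one]
    have h4 := congrArg Complex.re h2
    rw [Complex.re_sum] at h4
    rw [Complex.natCast_re] at h4
    rw [← h4]
    refine Finset.sum_congr rfl fun k _ => ?_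
    rw [hrdef]
    rw [show ((t k : ℂ)) = (((t k : ℝ)) : ℂ) by norm_cast]
    rw [Complex.re_ofReal_mul]
  have heq : ∀ k : Fin d, (t k : ℝ) * r k = (t k : ℝ) := by
    have hle : ∀ k ∈ Finset.univ, (t k : ℝ) * r k ≤ (t k : ℝ) := by
      intro k _
      calc (t k : ℝ) * r k ≤ (t k : ℝ) * 1 :=
            mul_le_mul_of_nonneg_left (hr_le k) (Nat.cast_nonneg _)
        _ = (t k : ℝ) := mul_one _
    have hsums : ∑ k : Fin d, (t k : ℝ) * r k = ∑ k : Fin d, (t k : ℝ) := by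
      rw [hsum_r]
      rw [show ∑ k : Fin d, ((t k : ℝ)) = ((∑ k : Fin d, t k : ℕ) : ℝ) by push_cast; ring, hsumt]
    intro k
    exact (Finset.sum_eq_sum_iff_of_le hle).1 hsums k (Finset.mem_univ k)
  have hχa : ∀ k : Fin d, t k ≠ 0 → χ (-k) = a1 := by
    intro k hk
    have hrk : r k = 1 := by
      have h2 : (t k : ℝ) ≠ 0 := Nat.cast_ne_zero.2 hk
      have h1 : (t k : ℝ) * r k = (t k : ℝ) * 1 := by rw [mul_one]; exact heq k
      exact mul_left_cancel₀ h2 h1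
    have hz : (starRingEnd ℂ) a1 * χ (-k) = 1 := by
      apply norm_eq_one_re_eq_one
      · rw [norm_mul, RCLike.norm_conj, ha1norm, hχ_norm, mul_one]
      · exact hrk
    calc χ (-k) = 1 * χ (-k) := (one_mul _).symm
      _ = (a1 * (starRingEnd ℂ) a1) * χ (-k) := by rw [hca]
      _ = a1 * ((starRingEnd ℂ) a1 * χ (-k)) := by ring
      _ = a1 := by rw [hz, mul_one]
  -- there is a unique index with nonzero t
  have hex : ∃ k : Fin d, t k ≠ 0 := by
    by_contra h
    push_neg at h
    have : (∑ k : Fin d, t k) = 0 := Finset.sum_eq_zero fun k _ => h k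
    rw [hsumt] at this
    exact hd.ne' this
  obtain ⟨k0, hk0⟩ := hex
  have huniq : ∀ k : Fin d, k ≠ k0 → t k = 0 := by
    intro k hkk
    by_contra hk
    have h1 : χ (-k) = χ (-k0) := by rw [hχa k hk, hχa k0 hk0]
    have h2 : -k = -k0 := hχ_inj h1
    exact hkk (neg_injective h2)
  have htk0 : t k0 = d := by
    have h1 : (∑ k : Fin d, t k) = t k0 :=
      Finset.sum_eq_single k0 (fun k _ hk => huniq k hk) (fun h => absurd (Finset.mem_univ k0) h)
    rw [← h1, hsumt]
  have hdC : (d : ℂ) ≠ 0 := Nat.cast_ne_zero.2 hd.ne'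
  have hb : ∀ k : Fin d, b k = if k = k0 then 1 else 0 := by
    intro k
    by_cases hkk : k = k0
    · subst hkk
      rw [if_pos rfl]
      have h1 : (d : ℂ) * b k = (d : ℂ) * 1 := by rw [mul_one, ← ht k, htk0]
      exact mul_left_cancel₀ hdC h1
    · rw [if_neg hkk]
      have h1 : (d : ℂ) * b k = (d : ℂ) * 0 := by
        rw [mul_zero, ← ht k, huniq k hkk]
        norm_num
      exact mul_left_cancel₀ hdC h1
  -- conclude
  set n : ℕ := ((-k0 : Fin d)).val with hndef
  have hBPn : B = P ^ n := by
    ext i j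
    rw [hBb i j, hPpow n i j, hndef, Fin.cast_val_eq_self, hb (i - j)]
    have hiff : (i - j = k0) ↔ (i + -k0 = j) := by
      constructor
      · intro h; rw [← h]; abel
      · intro h; rw [← h]; abel
    rw [if_congr hiff rfl rfl]
  refine Subgroup.mem_zpowers_iff.mpr ⟨(n : ℤ), ?_⟩
  rw [zpow_natCast]
  apply Units.ext
  rw [Units.val_pow_eq_pow_val, hA, hCval, ← _root_.map_pow, hBPn]



theorem maximal_cycle_self_centralized
    (d : ℕ) (G : Subgroup (GL (Fin d) ℂ))
    (hG : IsPermutationLikeGroup G)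
    (C : GL (Fin d) ℂ) (hCG : C ∈ G)
    (hC : IsMaximalCycle C.val) :
    ∀ A ∈ G, A * C = C * A → A ∈ Subgroup.zpowers C :=
  maximal_cycle_self_centralized' d G hG C hCG hC
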